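/- Let f be a radial function on (0,∞) with ∫_R^∞ |f(s)| s ds < ∞. Define F(r) = ∫_r^∞ f(s) ds for r ≥ R. Then (∫_R^∞ F(r)² r dr)^{1/2} ≤ ∫_R^∞ |f(s)| s ds. -/

import Mathlib

open MeasureTheory Set
open scoped ENNReal

theorem stmt0 (R : ℝ) (hR : 0 < R) (f : ℝ → ℝ) (hf : Measurable f)
    (hint : IntegrableOn (fun s => |f s| * s) (Set.Ioi R)) :
    Real.sqrt (∫ r in Set.Ioi R, (∫ s in Set.Ioi r, f s) ^ 2 * r) ≤
      ∫ s in Set.Ioi R, |f s| * s := by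
  set M : ℝ := ∫ s in Set.Ioi R, |f s| * s with hM
  have hMnn : 0 ≤ M := by
    apply setIntegral_nonneg measurableSet_Ioi
    intro s hs
    exact mul_nonneg (abs_nonneg _) (le_of_lt (hR.trans hs))
  -- integrability of f on Ioi r for r ≥ R
  have hfi : ∀ r, R ≤ r → IntegrableOn f (Set.Ioi r) := by
    intro r hr
    have h1 : IntegrableOn (fun s => |f s| * s) (Set.Ioi r) :=
      hint.mono_set (Set.Ioi_subset_Ioi hr)
    have h2 : IntegrableOn (fun s => |f s| * s / R) (Set.Ioi r) := h1.div_const R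
    refine Integrable.mono h2 hf.aestronglyMeasurable.restrict ?_
    filter_upwards [ae_restrict_mem measurableSet_Ioi] with s hs
    have hsR : R ≤ s := le_of_lt (lt_of_le_of_lt hr hs)
    rw [Real.norm_eq_abs, Real.norm_eq_abs,
      abs_of_nonneg (div_nonneg (mul_nonneg (abs_nonneg _) (hR.le.trans hsR)) hR.le)]
    rw [le_div_iff₀ hR]
    exact mul_le_mul_of_nonneg_left hsR (abs_nonneg _)
  have hfabsi : ∀ r, R ≤ r → IntegrableOn (fun s => |f s|) (Set.Ioi r) :=
    fun r hr => (hfi r hr).abs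
  set H : ℝ → ℝ := fun r => ∫ s in Set.Ioi r, |f s| with hH
  have hHnn : ∀ r, 0 ≤ H r := fun r =>
    setIntegral_nonneg measurableSet_Ioi (fun s _ => abs_nonneg _)
  -- pointwise bound : (∫ f)^2 * r ≤ M * H r for r > R
  have hpt : ∀ r ∈ Set.Ioi R, (∫ s in Set.Ioi r, f s) ^ 2 * r ≤ M * H r := by
    intro r hr
    rw [Set.mem_Ioi] at hr
    have habs : |∫ s in Set.Ioi r, f s| ≤ H r := by
      simpa [Real.norm_eq_abs] using
        norm_integral_le_integral_norm (μ := volume.restrict (Set.Ioi r)) f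
    have h1 : (∫ s in Set.Ioi r, f s) ^ 2 ≤ H r ^ 2 := by
      rw [← sq_abs]
      exact pow_le_pow_left₀ (abs_nonneg _) habs 2
    have h2 : H r * r ≤ M := by
      have e1 : H r * r = ∫ s in Set.Ioi r, |f s| * r :=
        (integral_mul_const r _).symm
      rw [e1]
      calc (∫ s in Set.Ioi r, |f s| * r) ≤ ∫ s in Set.Ioi r, |f s| * s := by
            apply setIntegral_mono_on ((hfabsi r hr.le).mul_const r)
              (hint.mono_set (Set.Ioi_subset_Ioi hr.le)) measurableSet_Ioi
            intro s hs
            exact mul_le_mul_of_nonneg_left (le_of_lt hs) (abs_nonneg _)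
        _ ≤ M := by
            apply setIntegral_mono_set hint
            · filter_upwards [ae_restrict_mem measurableSet_Ioi] with s hs
              exact mul_nonneg (abs_nonneg _) (hR.trans hs).le
            · exact HasSubset.Subset.eventuallyLE (Set.Ioi_subset_Ioi hr.le)
    calc (∫ s in Set.Ioi r, f s) ^ 2 * r ≤ H r ^ 2 * r := by
          exact mul_le_mul_of_nonneg_right h1 (hR.trans hr).le
      _ = H r * (H r * r) := by ring
      _ ≤ H r * M := mul_le_mul_of_nonneg_left h2 (hHnn r)
      _ = M * H r := mul_comm _ _
  -- key : ∫⁻ over Ioi R of ofReal (H r) ≤ ofReal M, via Tonelli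
  set K : ℝ≥0∞ := ∫⁻ s in Set.Ioi R, ENNReal.ofReal (|f s| * s) with hK
  have hKM : K = ENNReal.ofReal M := by
    rw [hK, hM, ofReal_integral_eq_lintegral_ofReal hint]
    filter_upwards [ae_restrict_mem measurableSet_Ioi] with s hs
    exact mul_nonneg (abs_nonneg _) (hR.trans hs).le
  have hswap : (∫⁻ r in Set.Ioi R, ENNReal.ofReal (H r)) ≤ K := by
    have heq : ∀ r ∈ Set.Ioi R, ENNReal.ofReal (H r)
        = ∫⁻ s, (fun p : ℝ × ℝ => if p.1 < p.2 then ENNReal.ofReal (|f p.2|) else 0) (r, s) := by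
      intro r hr
      rw [Set.mem_Ioi] at hr
      rw [hH]
      rw [ofReal_integral_eq_lintegral_ofReal (hfabsi r hr.le)
        (Filter.Eventually.of_forall fun s => abs_nonneg _)]
      rw [← lintegral_indicator measurableSet_Ioi _]
      apply lintegral_congr
      intro s
      simp [Set.indicator, Set.mem_Ioi]
    have hmeas : Measurable (fun p : ℝ × ℝ => if p.1 < p.2 then ENNReal.ofReal (|f p.2|) else 0) := by
      apply Measurable.ite (measurableSet_lt measurable_fst measurable_snd)
      · exact (ENNReal.measurable_ofReal.comp (hf.comp measurable_snd).abs)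
      · exact measurable_const
    calc (∫⁻ r in Set.Ioi R, ENNReal.ofReal (H r))
        = ∫⁻ r in Set.Ioi R, ∫⁻ s,
            (fun p : ℝ × ℝ => if p.1 < p.2 then ENNReal.ofReal (|f p.2|) else 0) (r, s) := by
          apply setLIntegral_congr_fun measurableSet_Ioi
          exact fun r hr => heq r hr
      _ = ∫⁻ s, ∫⁻ r in Set.Ioi R,
            (fun p : ℝ × ℝ => if p.1 < p.2 then ENNReal.ofReal (|f p.2|) else 0) (r, s) := by
          exact lintegral_lintegral_swap hmeas.aemeasurable
      _ = ∫⁻ s, ENNReal.ofReal (|f s|) * ENNReal.ofReal (s - R) := by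
          congr 1 with s
          have : ∀ r : ℝ, (if r < s then ENNReal.ofReal (|f s|) else 0)
              = Set.indicator (Set.Iio s) (fun _ => ENNReal.ofReal (|f s|)) r := by
            intro r; simp [Set.indicator, Set.mem_Iio]
          simp_rw [this]
          rw [lintegral_indicator measurableSet_Iio _, setLIntegral_const]
          rw [Measure.restrict_apply measurableSet_Iio]
          rw [Set.Iio_inter_Ioi, Real.volume_Ioo]
      _ ≤ ∫⁻ s, Set.indicator (Set.Ioi R) (fun s => ENNReal.ofReal (|f s| * s)) s := by
          apply lintegral_mono
          intro s
          show ENNReal.ofReal |f s| * ENNReal.ofReal (s - R) ≤ _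
          by_cases hs : R < s
          · rw [Set.indicator_of_mem (Set.mem_Ioi.mpr hs)]
            rw [← ENNReal.ofReal_mul (abs_nonneg _)]
            exact ENNReal.ofReal_le_ofReal
              (mul_le_mul_of_nonneg_left (by linarith) (abs_nonneg _))
          · rw [Set.indicator_of_notMem (by simpa using hs)]
            have : ENNReal.ofReal (s - R) = 0 := by
              simp [ENNReal.ofReal_eq_zero]; linarith [not_lt.mp hs]
            simp [this]
      _ = K := by rw [hK, ← lintegral_indicator measurableSet_Ioi _]
  -- measurability of H
  have hHmeas : StronglyMeasurable H := by
    have hg : StronglyMeasurable (fun p : ℝ × ℝ => if p.1 < p.2 then |f p.2| else 0) :=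
      (Measurable.ite (measurableSet_lt measurable_fst measurable_snd) (hf.comp measurable_snd).abs
        measurable_const).stronglyMeasurable
    have h2 := hg.integral_prod_right' (ν := (volume : Measure ℝ))
    have : H = fun r => ∫ s, (fun p : ℝ × ℝ => if p.1 < p.2 then |f p.2| else 0) (r, s) := by
      funext r
      show (∫ s in Set.Ioi r, |f s|) = _
      rw [← integral_indicator measurableSet_Ioi]
      apply integral_congr_ae
      filter_upwards with s
      simp [Set.indicator, Set.mem_Ioi]
    rw [this]
    exact h2
  -- integrability of H on Ioi R
  have hHint : IntegrableOn H (Set.Ioi R) := by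
    constructor
    · exact hHmeas.aestronglyMeasurable
    · rw [HasFiniteIntegral]
      calc (∫⁻ r in Set.Ioi R, ‖H r‖₊) = ∫⁻ r in Set.Ioi R, ENNReal.ofReal (H r) := by
            congr 1 with r
            exact Real.enorm_eq_ofReal (hHnn r)
        _ ≤ K := hswap
        _ < ⊤ := by rw [hKM]; exact ENNReal.ofReal_lt_top
  have hHle : (∫ r in Set.Ioi R, H r) ≤ M := by
    rw [integral_eq_lintegral_of_nonneg_ae (Filter.Eventually.of_forall hHnn)
      hHmeas.aestronglyMeasurable]
    have := ENNReal.toReal_mono (by rw [hKM]; exact ENNReal.ofReal_ne_top) hswap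
    rwa [hKM, ENNReal.toReal_ofReal hMnn] at this
  -- put things together
  have hmain : (∫ r in Set.Ioi R, (∫ s in Set.Ioi r, f s) ^ 2 * r) ≤ M * M := by
    calc (∫ r in Set.Ioi R, (∫ s in Set.Ioi r, f s) ^ 2 * r)
        ≤ ∫ r in Set.Ioi R, M * H r := by
          apply integral_mono_of_nonneg
          · filter_upwards [ae_restrict_mem measurableSet_Ioi] with r hr
            exact mul_nonneg (sq_nonneg _) (hR.trans hr).le
          · exact hHint.const_mul M
          · filter_upwards [ae_restrict_mem measurableSet_Ioi] with r hr
            exact hpt r hr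
      _ = M * ∫ r in Set.Ioi R, H r := integral_const_mul M H
      _ ≤ M * M := mul_le_mul_of_nonneg_left hHle hMnn
  calc Real.sqrt (∫ r in Set.Ioi R, (∫ s in Set.Ioi r, f s) ^ 2 * r)
      ≤ Real.sqrt (M * M) := Real.sqrt_le_sqrt hmain
    _ = M := Real.sqrt_mul_self hMnn
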